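/- Let Γ be an alphabet, c ≠ d two distinct letters of Γ, k ≥ 1, and let u₀,…,u_k, u'₀,…,u'_k, w₁,…,w_k, z₁,…,z_k be words over Γ. For a tuple s = (s₁,…,s_k) of letters, write E(s) for the equation u₀·w₁·s₁·z₁·u₁·w₂·s₂·z₂·u₂ ⋯ w_k·s_k·z_k·u_k = u'₀·w₁·s₁·z₁·u'₁ ⋯ w_k·s_k·z_k·u'_k. If E(s) holds for the tuple s = (c,c,…,c) and also for each of the k tuples obtained from (c,…,c) by replacing the j-th letter by d (for each j ∈ {1,…,k}), then uᵢ = u'ᵢ for every i ∈ {0,…,k}. -/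

import Mathlib

/-- One side of the equation `E(s)`: the word
`u₀·w₁·s₁·z₁·u₁·w₂·s₂·z₂·u₂ ⋯ w_k·s_k·z_k·u_k`, where `s = (s₁,…,s_k)` is a tuple
of letters. -/
def eqSide {Γ : Type*} {k : ℕ} (u : Fin (k + 1) → List Γ) (w z : Fin k → List Γ)
    (s : Fin k → Γ) : List Γ :=
  u 0 ++ (List.finRange k).flatMap (fun j => w j ++ s j :: (z j ++ u j.succ))

/-- If the equation `E(s)` (with unknowns `u₀,…,u_k` on the left and `u'₀,…,u'_k` on the
right) holds for the tuple `(c,…,c)` and for each of the `k` tuples obtained from `(c,…,c)`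
by replacing the `j`-th letter by `d`, where `c ≠ d`, then `uᵢ = u'ᵢ` for all `i`. -/
lemma key_cancel {Γ : Type*} {c d : Γ} (hcd : c ≠ d) {x x' A A' : List Γ}
    (h1 : x ++ c :: A = x' ++ c :: A') (h2 : x ++ d :: A = x' ++ d :: A') :
    x = x' ∧ A = A' := by
  have hlen : x.length = x'.length := by
    rcases lt_trichotomy x.length x'.length with h | h | h
    · exfalso
      have e1 : (x ++ c :: A)[x.length]'(by simp) = (x' ++ c :: A')[x.length]'(by
          simp; omega) := by simp_rw [h1]
      have e2 : (x ++ d :: A)[x.length]'(by simp) = (x' ++ d :: A')[x.length]'(by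
          simp; omega) := by simp_rw [h2]
      rw [List.getElem_append_right (le_refl _), List.getElem_append_left h] at e1
      rw [List.getElem_append_right (le_refl _), List.getElem_append_left h] at e2
      simp at e1 e2
      exact hcd (e1.trans e2.symm)
    · exact h
    · exfalso
      have e1 : (x ++ c :: A)[x'.length]'(by simp; omega) = (x' ++ c :: A')[x'.length]'(by
          simp) := by simp_rw [h1]
      have e2 : (x ++ d :: A)[x'.length]'(by simp; omega) = (x' ++ d :: A')[x'.length]'(by
          simp) := by simp_rw [h2]
      rw [List.getElem_append_left h, List.getElem_append_right (le_refl _)] at e1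
      rw [List.getElem_append_left h, List.getElem_append_right (le_refl _)] at e2
      simp at e1 e2
      exact hcd (e1.symm.trans e2)
  obtain ⟨hx, hA⟩ := List.append_inj h1 hlen
  exact ⟨hx, by simpa using hA⟩

lemma eqSide_succ {Γ : Type*} {k : ℕ} (u : Fin (k + 2) → List Γ)
    (w z : Fin (k+1) → List Γ) (s : Fin (k+1) → Γ) :
    eqSide u w z s
      = (u 0 ++ w 0) ++ s 0 ::
        eqSide (Fin.cases (z 0 ++ u 1) (fun i : Fin k => u i.succ.succ))
          (fun j : Fin k => w j.succ) (fun j => z j.succ) (fun j => s j.succ) := by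
  simp [eqSide, List.finRange_succ, List.flatMap_cons, List.flatMap_map, Function.comp]

theorem eq_aux {Γ : Type*} : ∀ (k : ℕ) (c d : Γ), c ≠ d →
    ∀ (u u' : Fin (k + 1) → List Γ) (w z : Fin k → List Γ),
    eqSide u w z (fun _ => c) = eqSide u' w z (fun _ => c) →
    (∀ j : Fin k,
      eqSide u w z (Function.update (fun _ => c) j d)
        = eqSide u' w z (Function.update (fun _ => c) j d)) →
    ∀ i, u i = u' i := by
  intro k
  induction k with
  | zero =>
    intro c d hcd u u' w z hc hd i
    have : i = 0 := Fin.fin_one_eq_zero i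
    subst this
    simpa [eqSide] using hc
  | succ k IH =>
    intro c d hcd u u' w z hc hd
    rw [eqSide_succ, eqSide_succ] at hc
    have hd0 := hd 0
    rw [eqSide_succ, eqSide_succ] at hd0
    simp only [Function.update_self] at hd0
    have hshift : (fun j : Fin k => Function.update (fun _ : Fin (k+1) => c) 0 d j.succ)
        = (fun _ => c) := by
      funext j
      rw [Function.update_of_ne (by simp [Fin.succ_ne_zero])]
    rw [hshift] at hd0
    -- hc : x ++ c :: A = x' ++ c :: A'   (s 0 = c)
    have hc' : (u 0 ++ w 0) ++ c :: _ = (u' 0 ++ w 0) ++ c :: _ := hc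
    obtain ⟨hx, hA⟩ := key_cancel hcd hc hd0
    have h0 : u 0 = u' 0 := by
      have := hx
      exact List.append_cancel_right this
    -- reduced flip equations
    have hd' : ∀ j : Fin k,
        eqSide (Fin.cases (z 0 ++ u 1) (fun i : Fin k => u i.succ.succ))
          (fun j : Fin k => w j.succ) (fun j => z j.succ)
          (Function.update (fun _ => c) j d)
        = eqSide (Fin.cases (z 0 ++ u' 1) (fun i : Fin k => u' i.succ.succ))
          (fun j : Fin k => w j.succ) (fun j => z j.succ)
          (Function.update (fun _ => c) j d) := by
      intro j
      have hdj := hd j.succ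
      rw [eqSide_succ, eqSide_succ] at hdj
      rw [Function.update_of_ne (Fin.succ_ne_zero j).symm] at hdj
      have hsh : (fun i : Fin k => Function.update (fun _ : Fin (k+1) => c) j.succ d i.succ)
          = Function.update (fun _ : Fin k => c) j d := by
        funext i
        by_cases h : i = j
        · subst h; simp
        · rw [Function.update_of_ne (by simpa using h),
            Function.update_of_ne h]
      rw [hsh] at hdj
      rw [hx] at hdj
      have := List.append_cancel_left hdj
      exact (List.cons_injective this : _)
    have hrec := IH c d hcd _ _ _ _ hA hd'
    intro i
    refine Fin.cases h0 (fun i => ?_) i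
    refine Fin.cases ?_ (fun i => ?_) i
    · have := hrec 0
      simpa using List.append_cancel_left this
    · have := hrec i.succ
      simpa using this

theorem eq_of_holds_on_flips {Γ : Type*} (k : ℕ) (hk : 1 ≤ k) (c d : Γ) (hcd : c ≠ d)
    (u u' : Fin (k + 1) → List Γ) (w z : Fin k → List Γ)
    (hc : eqSide u w z (fun _ => c) = eqSide u' w z (fun _ => c))
    (hd : ∀ j : Fin k,
      eqSide u w z (Function.update (fun _ => c) j d)
        = eqSide u' w z (Function.update (fun _ => c) j d)) :
    ∀ i, u i = u' i :=
  eq_aux k c d hcd u u' w z hc hd
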